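/- For every integer n ≥ 2, every (g,L) ∈ (0,1)×[0,∞), and every real S̃, one has γ(f_{g,L}, S̃) ≤ (1/(1+S̃²))·max{a_2, …, a_{n−1}, 2·max{1,|S̃|}·max{1, (g/(n·(√(1+S̃²) − g)))^{1/(n−1)}}}, where a_k = (g·|P_k(S̃)| / (k!·(√(1+S̃²) − g)))^{1/(k−1)}. -/

import Mathlib

noncomputable section

/-- The hyperbolic Kepler function `f_{g,L}(S) = S - g·arcsinh(S) - L`. -/
def fhk (g L : ℝ) : ℝ → ℝ := fun S => S - g * Real.arsinh S - L

/-- `β(f,z) = |f(z)/f'(z)|`. -/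
def betaFn (f : ℝ → ℝ) (z : ℝ) : ℝ := |f z / deriv f z|

/-- `γ(f,z) = sup_{k ≥ 2} |f^{(k)}(z)/(k!·f'(z))|^{1/(k-1)}`. -/
def gammaFn (f : ℝ → ℝ) (z : ℝ) : ℝ :=
  sSup {y : ℝ | ∃ k : ℕ, 2 ≤ k ∧
    y = |iteratedDeriv k f z / (Nat.factorial k * deriv f z)| ^ ((1 : ℝ) / ((k : ℝ) - 1))}

/-- `α(f,z) = β(f,z)·γ(f,z)`. -/
def alphaFn (f : ℝ → ℝ) (z : ℝ) : ℝ := betaFn f z * gammaFn f z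

/-- Smale's constant (improved by Wang–Han): `α₀ = 3 - 2√2`. -/
def alpha0 : ℝ := 3 - 2 * Real.sqrt 2

/-- `z` is an approximate zero of `f` when `α(f,z) < α₀`. -/
def ApproxZero (f : ℝ → ℝ) (z : ℝ) : Prop := alphaFn f z < alpha0

open Polynomial in
/-- The polynomials `P_k` defined by `P₁ = 1` and
`P_{k+1}(X) = (1-2k)·X·P_k(X) + (1+X²)·P_k'(X)` for `k ≥ 1`. -/
def P : ℕ → Polynomial ℝ
  | 0 => 0
  | 1 => 1
  | (k + 2) => C (1 - 2 * ((k : ℝ) + 1)) * X * P (k + 1)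
      + (1 + X ^ 2) * derivative (P (k + 1))

namespace GammaUpperBoundAux

open Polynomial

lemma P_succ_succ (k : ℕ) : P (k+2) = C (1 - 2 * ((k : ℝ) + 1)) * X * P (k + 1)
      + (1 + X ^ 2) * derivative (P (k + 1)) := by rw [P]

lemma P_one : P 1 = 1 := rfl

lemma P_two : P 2 = -X := by
  rw [P_succ_succ]; simp [P_one, map_ofNat]; ring

lemma P_def' (k : ℕ) (hk : 1 ≤ k) :
    P (k+1) = C (1 - 2 * (k : ℝ)) * X * P k + (1 + X ^ 2) * derivative (P k) := by
  obtain ⟨m, rfl⟩ := Nat.exists_eq_add_of_le hk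
  rw [show 1 + m + 1 = m + 2 by ring, P_succ_succ]
  norm_num
  ring_nf

lemma derivP : ∀ k : ℕ, derivative (P (k+1)) = C (-(k:ℝ)^2) * P k := by
  intro k
  induction k with
  | zero => simp [P_one]
  | succ k ih =>
    have key : C ((k:ℝ)^2) * P (k+1)
        = C ((k:ℝ)^2) * (C (1 - 2 * (k : ℝ)) * X * P k + (1 + X ^ 2) * derivative (P k)) := by
      rcases Nat.eq_zero_or_pos k with h | h
      · subst h; simp
      · rw [P_def' k h]
    rw [P_succ_succ, ih]
    simp only [derivative_add, derivative_mul, derivative_C, derivative_X, derivative_one,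
      derivative_X_pow, derivative_neg, map_neg, map_pow, map_one, map_add, map_sub, map_mul,
      map_ofNat, Nat.cast_add, Nat.cast_one] at key ⊢
    rw [ih]
    simp only [map_neg, map_pow]
    simp only [derivative_ofNat, derivative_pow, derivative_C, mul_zero, zero_mul, sub_zero, add_zero, zero_add, neg_zero]
    simp only [Nat.cast_ofNat, map_ofNat]
    linear_combination key

lemma P_three_term (k : ℕ) : P (k+2)
    = C (-(2*(k:ℝ)+1)) * X * P (k+1) + C (-(k:ℝ)^2) * (1+X^2) * P k := by
  rw [P_succ_succ, derivP]
  simp only [map_sub, map_add, map_mul, map_one, map_neg, map_pow, map_ofNat]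
  ring

open Complex intervalIntegral

def J (n : ℕ) (x : ℝ) : ℂ := ∫ φ in (0:ℝ)..(Real.pi), ((x:ℂ) + Complex.I * Real.cos φ)^n

lemma ccos : Continuous (fun φ:ℝ => ((Real.cos φ:ℝ):ℂ)) := by continuity

lemma contw (x : ℝ) (n : ℕ) : Continuous (fun φ : ℝ => ((x:ℂ) + Complex.I * Real.cos φ)^n) :=
  (continuous_const.add (continuous_const.mul ccos)).pow n

lemma hasderiv_pow_comp {f : ℝ → ℂ} {f' : ℂ} {φ : ℝ} (hf : HasDerivAt f f' φ) :
    ∀ n : ℕ, HasDerivAt (fun t => f t ^ (n+1)) (((n:ℂ)+1) * f φ ^ n * f') φ := by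
  intro n
  induction n with
  | zero => simpa using hf
  | succ n ih =>
    have h2 : HasDerivAt (fun t => f t ^ (n+1) * f t)
        ((((n:ℂ)+1) * f φ ^ n * f') * f φ + f φ ^ (n+1) * f') φ := ih.mul hf
    have he : (fun t => f t ^ (n+1) * f t) = fun t => f t ^ (n+1+1) := by
      funext t; ring
    rw [he] at h2
    convert h2 using 1
    push_cast
    ring

lemma J_zero (x : ℝ) : J 0 x = Real.pi := by simp [J]

lemma J_one (x : ℝ) : J 1 x = Real.pi * x := by
  rw [J]
  have h1 : (∫ φ in (0:ℝ)..Real.pi, ((x:ℂ) + Complex.I * Real.cos φ)^1)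
      = (∫ _ in (0:ℝ)..Real.pi, ((x:ℂ))) + ∫ φ in (0:ℝ)..Real.pi,
          Complex.I * ((Real.cos φ : ℝ) : ℂ) := by
    rw [← integral_add intervalIntegrable_const
      (show IntervalIntegrable (fun φ:ℝ => Complex.I * ((Real.cos φ:ℝ):ℂ)) MeasureTheory.volume 0 Real.pi from
        (continuous_const.mul ccos).intervalIntegrable _ _)]
    simp
  rw [h1, integral_const_mul, intervalIntegral.integral_ofReal,
    intervalIntegral.integral_ofReal, integral_cos]
  simp [mul_comm]

lemma J_rec (m : ℕ) (x : ℝ) :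
    ((m:ℂ)+2) * J (m+2) x
      = (2*(m:ℂ)+3) * x * J (m+1) x - ((m:ℂ)+1) * (1+(x:ℂ)^2) * J m x := by
  set w : ℝ → ℂ := fun φ => (x:ℂ) + Complex.I * Real.cos φ with hw
  have hD : ∀ φ : ℝ, HasDerivAt (fun φ : ℝ => ((Real.sin φ : ℝ):ℂ) * w φ ^ (m+1))
      (-Complex.I * (((m:ℂ)+2) * w φ ^ (m+2) - (2*(m:ℂ)+3) * x * w φ ^ (m+1)
        + ((m:ℂ)+1) * (1+(x:ℂ)^2) * w φ ^ m)) φ := by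
    intro φ
    have hsin : HasDerivAt (fun φ : ℝ => ((Real.sin φ : ℝ):ℂ)) ((Real.cos φ : ℝ):ℂ) φ :=
      (Real.hasDerivAt_sin φ).ofReal_comp
    have hcos : HasDerivAt (fun φ : ℝ => ((Real.cos φ : ℝ):ℂ)) (-(Real.sin φ : ℝ):ℂ) φ := by
      simpa using (Real.hasDerivAt_cos φ).ofReal_comp
    have hwd : HasDerivAt w (Complex.I * (-(Real.sin φ:ℝ):ℂ)) φ :=
      ((hcos.const_mul Complex.I).const_add _)
    have hp : HasDerivAt (fun φ => w φ ^ (m+1))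
        (((m:ℂ)+1) * w φ ^ m * (Complex.I * (-(Real.sin φ:ℝ):ℂ))) φ := hasderiv_pow_comp hwd m
    have hmul := hsin.mul hp
    refine hmul.congr_deriv (Eq.symm ?_)
    have h : ((Real.sin φ)^2 + (Real.cos φ)^2 : ℝ) = 1 := Real.sin_sq_add_cos_sq φ
    have h2 : (((Real.sin φ)^2 + (Real.cos φ)^2 : ℝ) : ℂ) = 1 := by rw [h]; simp
    rw [Complex.ofReal_add, Complex.ofReal_pow, Complex.ofReal_pow] at h2
    have hs : ((Real.sin φ:ℝ):ℂ)^2 = 1 - ((Real.cos φ:ℝ):ℂ)^2 := by linear_combination h2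
    have hI : Complex.I^2 = -1 := Complex.I_sq
    simp only [hw]
    linear_combination (Complex.I*((m:ℂ)+1)*((x:ℂ) + Complex.I * ((Real.cos φ:ℝ):ℂ))^m) * hs +
      (-(((x:ℂ) + Complex.I * ((Real.cos φ:ℝ):ℂ))^m *
        (((Real.cos φ:ℝ):ℂ)*x + ((m:ℂ)+2)*Complex.I*((Real.cos φ:ℝ):ℂ)^2))) * hI
  have hint : ∫ φ in (0:ℝ)..Real.pi,
      (-Complex.I * (((m:ℂ)+2) * w φ ^ (m+2) - (2*(m:ℂ)+3) * x * w φ ^ (m+1)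
        + ((m:ℂ)+1) * (1+(x:ℂ)^2) * w φ ^ m)) = 0 := by
    rw [integral_eq_sub_of_hasDerivAt (fun φ _ => hD φ)]
    · simp
    · apply Continuous.intervalIntegrable
      exact (continuous_const.mul (((continuous_const.mul (contw x (m+2))).sub
        (continuous_const.mul (contw x (m+1)))).add (continuous_const.mul (contw x m))))
  have hsplit : ∫ φ in (0:ℝ)..Real.pi,
      (-Complex.I * (((m:ℂ)+2) * w φ ^ (m+2) - (2*(m:ℂ)+3) * x * w φ ^ (m+1)
        + ((m:ℂ)+1) * (1+(x:ℂ)^2) * w φ ^ m))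
      = -Complex.I * (((m:ℂ)+2) * J (m+2) x - (2*(m:ℂ)+3) * x * J (m+1) x
        + ((m:ℂ)+1) * (1+(x:ℂ)^2) * J m x) := by
    rw [integral_const_mul, integral_add, integral_sub, integral_const_mul,
      integral_const_mul, integral_const_mul]
    · rfl
    · exact (continuous_const.mul (contw x (m+2))).intervalIntegrable _ _
    · exact (continuous_const.mul (contw x (m+1))).intervalIntegrable _ _
    · exact ((continuous_const.mul (contw x (m+2))).sub
        (continuous_const.mul (contw x (m+1)))).intervalIntegrable _ _
    · exact (continuous_const.mul (contw x m)).intervalIntegrable _ _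
  rw [hsplit] at hint
  have h2 : (((m:ℂ)+2) * J (m+2) x - (2*(m:ℂ)+3) * x * J (m+1) x
        + ((m:ℂ)+1) * (1+(x:ℂ)^2) * J m x) = 0 := by
    rcases mul_eq_zero.mp hint with h | h
    · exact absurd h (by simp [Complex.I_ne_zero])
    · exact h
  linear_combination h2

lemma evalP : ∀ k : ℕ, ∀ x : ℝ, (Real.pi : ℂ) * (((P (k+1)).eval x : ℝ) : ℂ)
    = (-1)^k * (Nat.factorial k : ℂ) * J k x := by
  intro k
  induction k using Nat.twoStepInduction with
  | zero => intro x; simp [P_one, J_zero]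
  | one => intro x; simp [P_two, J_one]
  | more n ih0 ih1 =>
    intro x
    rw [show n+2+1 = n+1+2 from rfl, P_three_term (n+1)]
    simp only [Polynomial.eval_add, Polynomial.eval_mul, Polynomial.eval_C, Polynomial.eval_X,
      Polynomial.eval_pow, Polynomial.eval_one]
    have ih1' := ih1 x
    have ih0' := ih0 x
    simp only [Nat.factorial_succ] at ih1' ⊢
    push_cast at ih1' ih0' ⊢
    linear_combination (-(2*(n:ℂ)+3)*(x:ℂ)) * ih1' + (-((n:ℂ)+1)^2*(1+(x:ℂ)^2)) * ih0'
      + ((-1)^(n+1)*((n:ℂ)+1)*((Nat.factorial n : ℂ))) * (J_rec n x)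

lemma abs_evalP (k : ℕ) (x : ℝ) :
    |(P (k+1)).eval x| ≤ (Nat.factorial k : ℝ) * Real.sqrt (1+x^2) ^ k := by
  have h := evalP k x
  have hJ : ‖J k x‖ ≤ Real.sqrt (1+x^2) ^ k * |Real.pi - 0| := by
    rw [J]
    apply intervalIntegral.norm_integral_le_of_norm_le_const
    intro φ _
    rw [norm_pow]
    apply pow_le_pow_left₀ (norm_nonneg _)
    have h1 : (x:ℂ) + Complex.I * (Real.cos φ : ℝ) = (x:ℝ) + (Real.cos φ : ℝ) * Complex.I := by
      ring
    rw [h1, Complex.norm_add_mul_I]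
    apply Real.sqrt_le_sqrt
    nlinarith [Real.neg_one_le_cos φ, Real.cos_le_one φ]
  have habs : Real.pi * |(P (k+1)).eval x| = (Nat.factorial k : ℝ) * ‖J k x‖ := by
    have h2 := congrArg (fun z : ℂ => ‖z‖) h
    simp only [norm_mul, norm_pow, norm_neg, norm_one, one_pow, one_mul,
      Complex.norm_real, Complex.norm_natCast, Real.norm_eq_abs,
      abs_of_pos Real.pi_pos] at h2
    exact h2
  rw [sub_zero, abs_of_pos Real.pi_pos] at hJ
  have hfac : (0:ℝ) ≤ (Nat.factorial k : ℝ) := Nat.cast_nonneg _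
  have hs : (0:ℝ) ≤ Real.sqrt (1+x^2) ^ k := by positivity
  nlinarith [Real.pi_pos, mul_le_mul_of_nonneg_left hJ hfac, abs_nonneg ((P (k+1)).eval x)]

lemma hasDerivAt_fhk (g L x : ℝ) :
    HasDerivAt (fhk g L) (1 - g * (Real.sqrt (1 + x ^ 2))⁻¹) x :=
  ((hasDerivAt_id x).sub ((Real.hasDerivAt_arsinh x).const_mul g)).sub_const L

lemma deriv_fhk (g L : ℝ) : deriv (fhk g L)
    = fun x => 1 - g * ((1 + x ^ 2) ^ (-((1:ℝ)/2))) := by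
  funext x
  rw [(hasDerivAt_fhk g L x).deriv, Real.sqrt_eq_rpow, ← Real.rpow_neg (by positivity)]

lemma eval_P_succ_succ (k : ℕ) (x : ℝ) : (P (k+2)).eval x
    = (1 - 2*((k:ℝ)+1)) * x * (P (k+1)).eval x
      + (1 + x^2) * ((derivative (P (k+1))).eval x) := by
  rw [P_succ_succ]; simp

lemma onexsq_pos (x : ℝ) : (0:ℝ) < 1 + x^2 := by positivity

lemma hasDerivAt_onexsq (x : ℝ) : HasDerivAt (fun y : ℝ => 1 + y^2) (2*x) x := by
  simpa using ((hasDerivAt_pow 2 x).const_add 1)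

lemma step_deriv (m : ℕ) (x : ℝ) :
    HasDerivAt (fun y : ℝ => (1+y^2) ^ ((1:ℝ)/2 - ((m:ℝ)+2)) * (P (m+2)).eval y)
      ((1+x^2) ^ ((1:ℝ)/2 - ((m:ℝ)+3)) * (P (m+3)).eval x) x := by
  have hb := hasDerivAt_onexsq x
  have hr : HasDerivAt (fun y : ℝ => (1+y^2) ^ ((1:ℝ)/2 - ((m:ℝ)+2)))
      ((2*x) * ((1:ℝ)/2 - ((m:ℝ)+2)) * (1+x^2) ^ (((1:ℝ)/2 - ((m:ℝ)+2)) - 1)) x :=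
    hb.rpow_const (Or.inl (ne_of_gt (onexsq_pos x)))
  have hp : HasDerivAt (fun y : ℝ => (P (m+2)).eval y)
      ((derivative (P (m+2))).eval x) x := (P (m+2)).hasDerivAt x
  have h := hr.mul hp
  refine h.congr_deriv ?_
  have hsplit : (1+x^2) ^ ((1:ℝ)/2 - ((m:ℝ)+2))
      = (1+x^2) ^ (((1:ℝ)/2 - ((m:ℝ)+2)) - 1) * (1+x^2) := by
    conv_lhs => rw [show ((1:ℝ)/2 - ((m:ℝ)+2)) = (((1:ℝ)/2 - ((m:ℝ)+2)) - 1) + 1 from by ring]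
    rw [Real.rpow_add (onexsq_pos x), Real.rpow_one]
  have hev : (P (m+3)).eval x
      = (1 - 2*(((m:ℝ)+1)+1)) * x * (P (m+2)).eval x
        + (1 + x^2) * ((derivative (P (m+2))).eval x) := by
    rw [show m+3 = (m+1)+2 from rfl, eval_P_succ_succ (m+1) x]
    push_cast; ring
  have hexp : (((1:ℝ)/2 - ((m:ℝ)+2)) - 1) = ((1:ℝ)/2 - ((m:ℝ)+3)) := by ring
  rw [hev, hsplit, hexp]
  ring

lemma iter_fhk (g L : ℝ) : ∀ m : ℕ, iteratedDeriv (m+2) (fhk g L)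
    = fun x => -g * ((1+x^2) ^ ((1:ℝ)/2 - ((m:ℝ)+2)) * (P (m+2)).eval x) := by
  intro m
  induction m with
  | zero =>
    rw [iteratedDeriv_succ, iteratedDeriv_one, deriv_fhk]
    funext x
    have hr : HasDerivAt (fun y : ℝ => (1+y^2) ^ (-((1:ℝ)/2)))
        ((2*x) * (-((1:ℝ)/2)) * (1+x^2) ^ ((-((1:ℝ)/2)) - 1)) x :=
      (hasDerivAt_onexsq x).rpow_const (Or.inl (ne_of_gt (onexsq_pos x)))
    have h : HasDerivAt (fun y : ℝ => 1 - g * ((1 + y^2) ^ (-((1:ℝ)/2))))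
        (-(g * ((2*x) * (-((1:ℝ)/2)) * (1+x^2) ^ ((-((1:ℝ)/2)) - 1)))) x :=
      (hr.const_mul g).const_sub 1
    rw [h.deriv]
    have h2 : (P 2).eval x = -x := by rw [P_two]; simp
    rw [h2]
    have h3 : ((-((1:ℝ)/2)) - 1) = ((1:ℝ)/2 - (((0:ℕ):ℝ)+2)) := by norm_num
    rw [h3]
    push_cast
    ring
  | succ m ih =>
    rw [show m+1+2 = (m+2)+1 from rfl, iteratedDeriv_succ, ih]
    funext x
    have h : HasDerivAt (fun y : ℝ => -g * ((1+y^2) ^ ((1:ℝ)/2 - ((m:ℝ)+2)) * (P (m+2)).eval y))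
        (-g * ((1+x^2) ^ ((1:ℝ)/2 - ((m:ℝ)+3)) * (P (m+3)).eval x)) x :=
      (step_deriv m x).const_mul (-g)
    rw [h.deriv]
    push_cast
    ring_nf

end GammaUpperBoundAux

set_option maxHeartbeats 1000000 in
open GammaUpperBoundAux in
/-- Lemma 2.3: for `n ≥ 2`, `(g,L) ∈ (0,1)×[0,∞)` and any real `S̃`,
`γ(f_{g,L},S̃) ≤ (1/(1+S̃²))·max{a₂,…,a_{n-1}, 2·max{1,|S̃|}·max{1,(g/(n(√(1+S̃²)-g)))^{1/(n-1)}}}`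
where `a_k = (g·|P_k(S̃)|/(k!·(√(1+S̃²)-g)))^{1/(k-1)}`. -/
theorem gamma_upper_bound (n : ℕ) (hn : 2 ≤ n) (g L : ℝ) (hg0 : 0 < g) (hg1 : g < 1)
    (hL : 0 ≤ L) (S : ℝ) :
    gammaFn (fhk g L) S ≤
      (1 / (1 + S ^ 2)) *
        Finset.fold max
          (2 * max 1 |S| *
            max 1 ((g / (n * (Real.sqrt (1 + S ^ 2) - g))) ^ ((1 : ℝ) / ((n : ℝ) - 1))))
          (fun k =>
            (g * |(P k).eval S| / (Nat.factorial k * (Real.sqrt (1 + S ^ 2) - g))) ^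
              ((1 : ℝ) / ((k : ℝ) - 1)))
          (Finset.Ico 2 n) := by
  have hSpos : (0:ℝ) < 1 + S ^ 2 := by positivity
  have hu1 : (1:ℝ) ≤ Real.sqrt (1 + S ^ 2) := by
    nlinarith [Real.sq_sqrt (show (0:ℝ) ≤ 1 + S ^ 2 by positivity),
      Real.sqrt_nonneg (1 + S ^ 2)]
  have hu0 : (0:ℝ) < Real.sqrt (1 + S ^ 2) := lt_of_lt_of_le one_pos hu1
  have hden : (0:ℝ) < Real.sqrt (1 + S ^ 2) - g := by linarith
  have hderiv : deriv (fhk g L) S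
      = (Real.sqrt (1 + S ^ 2) - g) / Real.sqrt (1 + S ^ 2) := by
    rw [(hasDerivAt_fhk g L S).deriv]
    field_simp
  refine csSup_le ⟨_, ⟨2, le_refl 2, rfl⟩⟩ ?_
  rintro y ⟨k, hk2, rfl⟩
  obtain ⟨m, rfl⟩ : ∃ m, k = m + 2 := ⟨k - 2, by omega⟩
  have hIter : iteratedDeriv (m+2) (fhk g L) S
      = -g * ((1+S^2) ^ ((1:ℝ)/2 - ((m:ℝ)+2)) * (P (m+2)).eval S) :=
    congrFun (iter_fhk g L m) S
  rw [hIter, hderiv]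
  have hEpos : (0:ℝ) < (1+S^2) ^ ((1:ℝ)/2 - ((m:ℝ)+2)) := Real.rpow_pos_of_pos hSpos _
  have hFpos : (0:ℝ) < (Nat.factorial (m+2) : ℝ) := by
    exact_mod_cast Nat.factorial_pos (m+2)
  have hm1 : (0:ℝ) < (m:ℝ)+1 := by positivity
  have hEu : (1+S^2) ^ ((1:ℝ)/2 - ((m:ℝ)+2)) * Real.sqrt (1+S^2)
      = (1+S^2) ^ (-((m:ℝ)+1)) := by
    rw [Real.sqrt_eq_rpow, ← Real.rpow_add hSpos]
    congr 1
    ring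
  have habs : |(-g * ((1+S^2) ^ ((1:ℝ)/2 - ((m:ℝ)+2)) * (P (m+2)).eval S))
        / ((Nat.factorial (m+2) : ℝ) * ((Real.sqrt (1+S^2) - g) / Real.sqrt (1+S^2)))|
      = (g * |(P (m+2)).eval S| / ((Nat.factorial (m+2) : ℝ) * (Real.sqrt (1+S^2) - g)))
          * (1+S^2) ^ (-((m:ℝ)+1)) := by
    rw [abs_div, abs_mul, abs_neg, abs_of_pos hg0, abs_mul, abs_of_pos hEpos,
      abs_of_pos (mul_pos hFpos (div_pos hden hu0))]
    rw [← hEu]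
    field_simp
  rw [habs]
  -- split the rpow
  have hA0 : (0:ℝ) ≤ g * |(P (m+2)).eval S|
      / ((Nat.factorial (m+2) : ℝ) * (Real.sqrt (1+S^2) - g)) := by positivity
  have hss : ((1+S^2) ^ (-((m:ℝ)+1))) ^ ((1:ℝ)/(((m+2:ℕ):ℝ) - 1)) = (1+S^2)⁻¹ := by
    rw [← Real.rpow_mul hSpos.le,
      show (-((m:ℝ)+1)) * ((1:ℝ)/(((m+2:ℕ):ℝ) - 1)) = -1 from by
        push_cast
        rw [show ((m:ℝ)+2-1) = (m:ℝ)+1 from by ring]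
        field_simp,
      Real.rpow_neg_one]
  rw [Real.mul_rpow hA0 (Real.rpow_pos_of_pos hSpos _).le, hss]
  rw [one_div (1+S^2), mul_comm]
  apply mul_le_mul_of_nonneg_left _ (inv_nonneg.mpr hSpos.le)
  -- Now: A ^ (1/(↑(m+2)-1)) ≤ fold
  set A : ℝ := g * |(P (m+2)).eval S|
      / ((Nat.factorial (m+2) : ℝ) * (Real.sqrt (1+S^2) - g)) with hA
  rcases lt_or_ge (m+2) n with hlt | hge
  · exact (Finset.le_fold_max _).mpr (Or.inr ⟨m+2, Finset.mem_Ico.mpr ⟨by omega, hlt⟩, le_refl _⟩)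
  · apply (Finset.le_fold_max _).mpr
    apply Or.inl
    -- tail bound
    have hP : |(P (m+2)).eval S| ≤ (Nat.factorial (m+1) : ℝ) * Real.sqrt (1+S^2) ^ (m+1) :=
      abs_evalP (m+1) S
    have hfac1 : (0:ℝ) < (Nat.factorial (m+1) : ℝ) := by
      exact_mod_cast Nat.factorial_pos (m+1)
    have h1 : A ≤ g / (((m:ℝ)+2) * (Real.sqrt (1+S^2) - g)) * Real.sqrt (1+S^2) ^ (m+1) := by
      have hnum : g * |(P (m+2)).eval S|
          ≤ g * ((Nat.factorial (m+1) : ℝ) * Real.sqrt (1+S^2) ^ (m+1)) :=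
        mul_le_mul_of_nonneg_left hP hg0.le
      have heq : g / (((m:ℝ)+2) * (Real.sqrt (1+S^2) - g)) * Real.sqrt (1+S^2) ^ (m+1)
          = g * ((Nat.factorial (m+1) : ℝ) * Real.sqrt (1+S^2) ^ (m+1))
            / ((Nat.factorial (m+2) : ℝ) * (Real.sqrt (1+S^2) - g)) := by
        rw [show Nat.factorial (m+2) = (m+2) * Nat.factorial (m+1) from rfl]
        push_cast
        field_simp
      rw [hA, heq]
      have hD : (0:ℝ) < (Nat.factorial (m+2) : ℝ) * (Real.sqrt (1+S^2) - g) :=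
        mul_pos hFpos hden
      exact (div_le_div_iff_of_pos_right hD).mpr hnum
    rw [show ((m+2:ℕ):ℝ) - 1 = (m:ℝ)+1 from by push_cast; ring]
    have he0 : (0:ℝ) ≤ (1:ℝ)/((m:ℝ)+1) := by positivity
    have hq0 : (0:ℝ) ≤ g / (((m:ℝ)+2) * (Real.sqrt (1+S^2) - g)) := by positivity
    have hpow : (Real.sqrt (1+S^2) ^ (m+1)) ^ ((1:ℝ)/((m:ℝ)+1)) = Real.sqrt (1+S^2) := by
      rw [← Real.rpow_natCast (Real.sqrt (1+S^2)) (m+1), ← Real.rpow_mul (Real.sqrt_nonneg _),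
        show (((m+1:ℕ):ℝ)) * ((1:ℝ)/((m:ℝ)+1)) = 1 from by push_cast; field_simp,
        Real.rpow_one]
    have h2 : A ^ ((1:ℝ)/((m:ℝ)+1))
        ≤ (g / (((m:ℝ)+2) * (Real.sqrt (1+S^2) - g))) ^ ((1:ℝ)/((m:ℝ)+1))
          * Real.sqrt (1+S^2) := by
      calc A ^ ((1:ℝ)/((m:ℝ)+1))
          ≤ (g / (((m:ℝ)+2) * (Real.sqrt (1+S^2) - g))
              * Real.sqrt (1+S^2) ^ (m+1)) ^ ((1:ℝ)/((m:ℝ)+1)) :=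
            Real.rpow_le_rpow hA0 h1 he0
        _ = (g / (((m:ℝ)+2) * (Real.sqrt (1+S^2) - g))) ^ ((1:ℝ)/((m:ℝ)+1))
              * (Real.sqrt (1+S^2) ^ (m+1)) ^ ((1:ℝ)/((m:ℝ)+1)) :=
            Real.mul_rpow hq0 (by positivity)
        _ = _ := by rw [hpow]
    have hsqrt2 : (1:ℝ) ≤ Real.sqrt 2 := by
      nlinarith [Real.sq_sqrt (show (0:ℝ) ≤ 2 by norm_num), Real.sqrt_nonneg 2]
    have hn2 : (2:ℝ) ≤ (n:ℝ) := by exact_mod_cast hn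
    have hnm : ((n:ℝ)) ≤ (m:ℝ)+2 := by
      have : (n:ℝ) ≤ ((m+2:ℕ):ℝ) := by exact_mod_cast hge
      push_cast at this; linarith
    have hmax1 : (1:ℝ) ≤ max 1 ((g / (n * (Real.sqrt (1 + S ^ 2) - g)))
        ^ ((1 : ℝ) / ((n : ℝ) - 1))) := le_max_left _ _
    have h3 : (g / (((m:ℝ)+2) * (Real.sqrt (1+S^2) - g))) ^ ((1:ℝ)/((m:ℝ)+1))
        ≤ Real.sqrt 2 * max 1 ((g / (n * (Real.sqrt (1 + S ^ 2) - g)))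
            ^ ((1 : ℝ) / ((n : ℝ) - 1))) := by
      rcases le_or_gt (g / (((m:ℝ)+2) * (Real.sqrt (1+S^2) - g))) 1 with hq | hq
      · have hle1 : (g / (((m:ℝ)+2) * (Real.sqrt (1+S^2) - g))) ^ ((1:ℝ)/((m:ℝ)+1))
            ≤ 1 := Real.rpow_le_one hq0 hq he0
        refine le_trans hle1 ?_
        calc (1:ℝ) = 1 * 1 := by ring
          _ ≤ Real.sqrt 2 * max 1 ((g / (n * (Real.sqrt (1 + S ^ 2) - g)))
              ^ ((1 : ℝ) / ((n : ℝ) - 1))) :=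
            mul_le_mul hsqrt2 hmax1 one_pos.le (by linarith)
      · have hQn : g / (((m:ℝ)+2) * (Real.sqrt (1+S^2) - g))
            ≤ g / ((n:ℝ) * (Real.sqrt (1+S^2) - g)) := by
          have hd1 : (0:ℝ) < ((m:ℝ)+2) * (Real.sqrt (1+S^2) - g) :=
            mul_pos (by positivity) hden
          have hd2 : (0:ℝ) < ((n:ℝ)) * (Real.sqrt (1+S^2) - g) :=
            mul_pos (by linarith) hden
          rw [div_le_div_iff₀ hd1 hd2]
          nlinarith [mul_le_mul_of_nonneg_left
            (mul_le_mul_of_nonneg_right hnm hden.le) hg0.le]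
        calc (g / (((m:ℝ)+2) * (Real.sqrt (1+S^2) - g))) ^ ((1:ℝ)/((m:ℝ)+1))
            ≤ (g / (((m:ℝ)+2) * (Real.sqrt (1+S^2) - g))) ^ ((1:ℝ)/((n:ℝ)-1)) := by
              apply Real.rpow_le_rpow_of_exponent_le hq.le
              apply one_div_le_one_div_of_le (by linarith) (by linarith)
          _ ≤ (g / ((n:ℝ) * (Real.sqrt (1+S^2) - g))) ^ ((1:ℝ)/((n:ℝ)-1)) :=
              Real.rpow_le_rpow hq0 hQn (one_div_nonneg.mpr (by linarith))
          _ ≤ max 1 ((g / (n * (Real.sqrt (1 + S ^ 2) - g))) ^ ((1 : ℝ) / ((n : ℝ) - 1))) :=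
              le_max_right _ _
          _ ≤ Real.sqrt 2 * max 1 ((g / (n * (Real.sqrt (1 + S ^ 2) - g)))
              ^ ((1 : ℝ) / ((n : ℝ) - 1))) :=
            le_mul_of_one_le_left (by linarith) hsqrt2
    have h4 : Real.sqrt (1+S^2) ≤ Real.sqrt 2 * max 1 |S| := by
      have hM0 : (0:ℝ) ≤ max 1 |S| := by positivity
      have hrw : Real.sqrt 2 * max 1 |S| = Real.sqrt (2 * (max 1 |S|)^2) := by
        rw [Real.sqrt_mul (by norm_num : (0:ℝ) ≤ 2), Real.sqrt_sq hM0]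
      rw [hrw]
      apply Real.sqrt_le_sqrt
      nlinarith [pow_le_pow_left₀ (abs_nonneg S) (le_max_right (1:ℝ) |S|) 2,
        pow_le_pow_left₀ (zero_le_one) (le_max_left (1:ℝ) |S|) 2, sq_abs S]
    have h22 : Real.sqrt 2 * Real.sqrt 2 = 2 := Real.mul_self_sqrt (by norm_num)
    calc A ^ ((1:ℝ)/((m:ℝ)+1))
        ≤ (g / (((m:ℝ)+2) * (Real.sqrt (1+S^2) - g))) ^ ((1:ℝ)/((m:ℝ)+1))
            * Real.sqrt (1+S^2) := h2
      _ ≤ (Real.sqrt 2 * max 1 ((g / (n * (Real.sqrt (1 + S ^ 2) - g)))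
              ^ ((1 : ℝ) / ((n : ℝ) - 1))))
            * (Real.sqrt 2 * max 1 |S|) :=
          mul_le_mul h3 h4 (Real.sqrt_nonneg _) (by positivity)
      _ = 2 * max 1 |S| * max 1 ((g / (n * (Real.sqrt (1 + S ^ 2) - g)))
              ^ ((1 : ℝ) / ((n : ℝ) - 1))) := by
          rw [show ∀ a b : ℝ, (Real.sqrt 2 * a) * (Real.sqrt 2 * b)
              = (Real.sqrt 2 * Real.sqrt 2) * (b * a) from fun a b => by ring, h22]
          ring
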